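/- Let m₁ and m₂ be Herglotz–Nevanlinna functions with m₁(z) = −1/m₂(z), and let ρ₁, ρ₂ be the measures in their respective integral representations. Assume m₂(z)/z → β > 0 as |z| → ∞ along the imaginary axis. Then for any K ∈ ℕ₀, the moments of ρ₂ exist up to order 2K if and only if the moments of ρ₁ exist up to order 2K+2. -/

import Mathlib

open MeasureTheory Filter Complex

/-- A Herglotz--Nevanlinna function: analytic on `ℂ ∖ ℝ`, mapping the upper
half-plane into its closure, and symmetric under complex conjugation. -/
def IsHerglotz (m : ℂ → ℂ) : Prop :=
  DifferentiableOn ℂ m {z : ℂ | z.im ≠ 0} ∧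
  (∀ z : ℂ, 0 < z.im → 0 ≤ (m z).im) ∧
  (∀ z : ℂ, z.im ≠ 0 → m (starRingEnd ℂ z) = starRingEnd ℂ (m z))

/-- The Herglotz integral representation `m(z) = a + bz + ∫ (1/(λ-z) - λ/(1+λ²)) dρ(λ)`
with `a ∈ ℝ`, `b ≥ 0` and `ρ` a non-negative Borel measure with `∫ dρ/(1+λ²) < ∞`. -/
def HerglotzRep (m : ℂ → ℂ) (a b : ℝ) (ρ : Measure ℝ) : Prop :=
  0 ≤ b ∧ Integrable (fun l : ℝ => 1 / (1 + l ^ 2)) ρ ∧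
  ∀ z : ℂ, z.im ≠ 0 →
    m z = (a : ℂ) + (b : ℂ) * z +
      ∫ l : ℝ, (((l : ℂ) - z)⁻¹ - (l : ℂ) / (1 + (l : ℂ) ^ 2)) ∂ρ




noncomputable section

/-- `HE f N` : `f` has an asymptotic expansion in powers of `η⁻²` to order `N` at `atTop`. -/
def HE : (ℝ → ℝ) → ℕ → Prop
  | f, 0 => ∃ C : ℝ, ∀ᶠ η in atTop, |f η| ≤ C
  | f, (N+1) => ∃ c : ℝ, Tendsto f atTop (nhds c) ∧ HE (fun η => η^2 * (f η - c)) N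

theorem HE.congr : ∀ {N : ℕ} {f g : ℝ → ℝ}, f =ᶠ[atTop] g → HE f N → HE g N
  | 0, f, g, hfg, ⟨C, hC⟩ => ⟨C, by
      filter_upwards [hC, hfg] with η h1 h2; rw [← h2]; exact h1⟩
  | (N+1), f, g, hfg, ⟨c, hc, h⟩ => ⟨c, hc.congr' hfg, HE.congr
      (by filter_upwards [hfg] with η h2; rw [h2]) h⟩

theorem HE.bounded : ∀ {N : ℕ} {f : ℝ → ℝ}, HE f N → ∃ C : ℝ, ∀ᶠ η in atTop, |f η| ≤ C
  | 0, f, h => h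
  | (N+1), f, ⟨c, hc, _⟩ =>
    ⟨|c| + 1, hc.abs.eventually (eventually_le_nhds (lt_add_one _))⟩

theorem HE.mono : ∀ {N : ℕ} {f : ℝ → ℝ}, HE f (N+1) → HE f N
  | 0, f, h => h.bounded
  | (N+1), f, ⟨c, hc, h⟩ => ⟨c, hc, h.mono⟩

theorem HE.const (c : ℝ) : ∀ N : ℕ, HE (fun _ => c) N
  | 0 => ⟨|c|, Eventually.of_forall fun _ => le_rfl⟩
  | (N+1) => ⟨c, tendsto_const_nhds, by
      have : (fun η : ℝ => η^2 * (c - c)) = fun _ => (0:ℝ) := by funext η; ring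
      rw [this]; exact HE.const 0 N⟩

theorem HE.add : ∀ {N : ℕ} {f g : ℝ → ℝ}, HE f N → HE g N → HE (fun η => f η + g η) N
  | 0, f, g, ⟨C, hC⟩, ⟨D, hD⟩ => ⟨C + D, by
      filter_upwards [hC, hD] with η h1 h2
      exact (abs_add_le _ _).trans (add_le_add h1 h2)⟩
  | (N+1), f, g, ⟨c, hc, hf⟩, ⟨d, hd, hg⟩ => ⟨c + d, hc.add hd, by
      have : (fun η : ℝ => η^2 * ((f η + g η) - (c + d)))
          = fun η => η^2 * (f η - c) + η^2 * (g η - d) := by funext η; ring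
      rw [this]; exact hf.add hg⟩

theorem HE.mul : ∀ {N : ℕ} {f g : ℝ → ℝ}, HE f N → HE g N → HE (fun η => f η * g η) N
  | 0, f, g, ⟨C, hC⟩, ⟨D, hD⟩ => ⟨|C| * |D|, by
      filter_upwards [hC, hD] with η h1 h2
      rw [_root_.abs_mul]
      exact mul_le_mul (h1.trans (le_abs_self C)) (h2.trans (le_abs_self D))
        (_root_.abs_nonneg _) (_root_.abs_nonneg _)⟩
  | (N+1), f, g, ⟨c, hc, hf⟩, ⟨d, hd, hg⟩ => ⟨c * d, hc.mul hd, by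
      have : (fun η : ℝ => η^2 * ((f η * g η) - (c * d)))
          = fun η => (η^2 * (f η - c)) * g η + c * (η^2 * (g η - d)) := by funext η; ring
      rw [this]
      exact HE.add (HE.mul hf (HE.mono (⟨d, hd, hg⟩ : HE g (N+1)))) (HE.mul (HE.const c N) hg)⟩

theorem HE.neg {N : ℕ} {f : ℝ → ℝ} (hf : HE f N) : HE (fun η => -(f η)) N := by
  have : (fun η => -(f η)) = fun η => (-1 : ℝ) * f η := by funext η; ring
  rw [this]; exact (HE.const (-1) N).mul hf

theorem HE.sub {N : ℕ} {f g : ℝ → ℝ} (hf : HE f N) (hg : HE g N) :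
    HE (fun η => f η - g η) N := by
  have : (fun η => f η - g η) = fun η => f η + -(g η) := by funext η; ring
  rw [this]; exact hf.add hg.neg

theorem HE.inv {N : ℕ} {f : ℝ → ℝ} {c : ℝ} (hf : HE f N)
    (hc : Tendsto f atTop (nhds c)) (hc0 : c ≠ 0) : HE (fun η => (f η)⁻¹) N := by
  induction N generalizing f with
  | zero =>
    refine ⟨(|c|/2)⁻¹, ?_⟩
    have h2 : ∀ᶠ η in atTop, |c|/2 ≤ |f η| :=
      hc.abs.eventually (eventually_ge_nhds (half_lt_self (_root_.abs_pos.mpr hc0)))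
    filter_upwards [h2] with η h
    rw [_root_.abs_inv]
    exact inv_anti₀ (by positivity) h
  | succ N ih =>
    obtain ⟨c', hc', h⟩ := hf
    have hcc : c' = c := tendsto_nhds_unique hc' hc
    rw [hcc] at hc' h
    refine ⟨c⁻¹, hc.inv₀ hc0, ?_⟩
    have hne : ∀ᶠ η in atTop, f η ≠ 0 := hc.eventually_ne hc0
    have heq : (fun η => (η^2 * (f η - c)) * (-c⁻¹ * (f η)⁻¹))
        =ᶠ[atTop] fun η => η^2 * ((f η)⁻¹ - c⁻¹) := by
      filter_upwards [hne] with η hη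
      field_simp
      ring
    exact HE.congr heq (h.mul ((HE.const (-c⁻¹) N).mul
      (ih (HE.mono ⟨c, hc, h⟩) hc)))

theorem HE.shift {N : ℕ} {g : ℝ → ℝ} (hg : HE g N) :
    HE (fun η => (η^2)⁻¹ * g η) (N+1) := by
  obtain ⟨C, hC⟩ := hg.bounded
  refine ⟨0, ?_, ?_⟩
  · have hb : ∀ᶠ η in atTop, ‖(η^2)⁻¹ * g η‖ ≤ C * (η^2)⁻¹ := by
      filter_upwards [hC, eventually_ge_atTop (1:ℝ)] with η h1 h2
      have hη : (0:ℝ) < η^2 := by positivity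
      rw [Real.norm_eq_abs, _root_.abs_mul, _root_.abs_inv, _root_.abs_of_nonneg (le_of_lt hη),
        mul_comm C ((η^2)⁻¹)]
      exact mul_le_mul_of_nonneg_left h1 (inv_nonneg.mpr hη.le)
    have h1 : Tendsto (fun η : ℝ => C * (η^2)⁻¹) atTop (nhds (C * 0)) :=
      ((tendsto_pow_atTop two_ne_zero).inv_tendsto_atTop).const_mul C
    exact squeeze_zero_norm' hb (by simpa using h1)
  · refine HE.congr ?_ hg
    filter_upwards [eventually_ge_atTop (1:ℝ)] with η h2
    have hη : (η:ℝ)^2 ≠ 0 := by positivity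
    field_simp
    simp

theorem HE.unshift {N : ℕ} {f : ℝ → ℝ} (hf : HE f (N+1))
    (h0 : Tendsto f atTop (nhds 0)) : HE (fun η => η^2 * f η) N := by
  obtain ⟨c, hc, h⟩ := hf
  obtain rfl : c = 0 := tendsto_nhds_unique hc h0
  simpa using h
/-- even moment-remainder functions -/
def Hm (ρ : Measure ℝ) (n : ℕ) (η : ℝ) : ℝ := ∫ l : ℝ, l^(2*n) * (l^2 + η^2)⁻¹ ∂ρ

/-- odd moment-remainder functions -/
def Em (ρ : Measure ℝ) (n : ℕ) (η : ℝ) : ℝ := ∫ l : ℝ, l^(2*n+1) * (l^2 + η^2)⁻¹ ∂ρ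

section MeasureLemmas

variable {ρ : Measure ℝ}

lemma denom_pos {η : ℝ} (hη : η ≠ 0) (l : ℝ) : 0 < l^2 + η^2 := by positivity

lemma cont_inv {η : ℝ} (hη : η ≠ 0) : Continuous fun l : ℝ => (l^2 + η^2)⁻¹ :=
  ((continuous_pow 2).add continuous_const).inv₀ fun l => (denom_pos hη l).ne'

lemma ratio_le_one {η l : ℝ} (hη : η ≠ 0) : η^2 * (l^2+η^2)⁻¹ ≤ 1 := by
  rw [mul_inv_le_iff₀ (denom_pos hη l), one_mul]
  nlinarith [sq_nonneg l]

/-- integrability of the base integrand -/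
lemma int_inv (hρ : Integrable (fun l : ℝ => 1 / (1 + l ^ 2)) ρ) {η : ℝ} (hη : η ≠ 0) :
    Integrable (fun l : ℝ => (l^2 + η^2)⁻¹) ρ := by
  have h2 : (0:ℝ) < η^2 := by positivity
  refine Integrable.mono (hρ.const_mul (max 1 (η^2)⁻¹)) ((cont_inv hη).aestronglyMeasurable) ?_
  refine Eventually.of_forall fun l => ?_
  have h1 : (0:ℝ) < 1 + l^2 := by positivity
  have hc : (0:ℝ) < max 1 (η^2)⁻¹ := lt_of_lt_of_le one_pos (le_max_left _ _)
  have h3 : 1 + l^2 ≤ (max 1 (η^2)⁻¹) * (l^2 + η^2) := by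
    have e1 : (1:ℝ) ≤ max 1 (η^2)⁻¹ := le_max_left _ _
    have e2 : (η^2)⁻¹ ≤ max 1 (η^2)⁻¹ := le_max_right _ _
    have e3 : (η^2)⁻¹ * η^2 = 1 := inv_mul_cancel₀ h2.ne'
    nlinarith [sq_nonneg l]
  have key : (l^2+η^2)⁻¹ ≤ (max 1 (η^2)⁻¹) * (1/(1+l^2)) := by
    rw [one_div, ← div_eq_mul_inv, le_div_iff₀ h1, inv_mul_eq_div, div_le_iff₀ (denom_pos hη l)]
    linarith
  rw [Real.norm_eq_abs, Real.norm_eq_abs, _root_.abs_of_nonneg (le_of_lt (by positivity)),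
    _root_.abs_of_nonneg (by positivity)]
  exact key

/-- domination by an integrable function gives integrability of `g l * (l²+η²)⁻¹` -/
lemma int_mul_inv {g b : ℝ → ℝ} (hb : Integrable b ρ) (hgc : Continuous g) {η : ℝ}
    (hη : η ≠ 0) (hbd : ∀ l, |g l| * (l^2+η^2)⁻¹ ≤ |b l|) :
    Integrable (fun l : ℝ => g l * (l^2 + η^2)⁻¹) ρ := by
  refine Integrable.mono hb ((hgc.mul (cont_inv hη)).aestronglyMeasurable) ?_
  refine Eventually.of_forall fun l => ?_
  rw [Real.norm_eq_abs, Real.norm_eq_abs, _root_.abs_mul,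
    _root_.abs_of_nonneg (le_of_lt (inv_pos.mpr (denom_pos hη l)))]
  exact hbd l

lemma int_pow_mul_inv {n : ℕ} (hn : Integrable (fun l : ℝ => l^(2*n)) ρ) {η : ℝ}
    (hη : η ≠ 0) : Integrable (fun l : ℝ => l^(2*n) * (l^2 + η^2)⁻¹) ρ := by
  refine int_mul_inv (hn.const_mul (η^2)⁻¹) (continuous_pow _) hη fun l => ?_
  have h2 : (0:ℝ) < η^2 := by positivity
  have : (l^2+η^2)⁻¹ ≤ (η^2)⁻¹ := inv_anti₀ h2 (by nlinarith [sq_nonneg l])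
  calc |l^(2*n)| * (l^2+η^2)⁻¹ ≤ |l^(2*n)| * (η^2)⁻¹ :=
        mul_le_mul_of_nonneg_left this (_root_.abs_nonneg _)
    _ = |(η^2)⁻¹ * l^(2*n)| := by
        rw [_root_.abs_mul, _root_.abs_of_nonneg (inv_nonneg.mpr h2.le), mul_comm]
    _ ≤ |(η^2)⁻¹ * l^(2*n)| := le_rfl

lemma int_pow_succ_mul_inv {n : ℕ} (hn : Integrable (fun l : ℝ => l^(2*n)) ρ) {η : ℝ}
    (hη : η ≠ 0) : Integrable (fun l : ℝ => l^(2*(n+1)) * (l^2 + η^2)⁻¹) ρ := by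
  refine int_mul_inv hn (continuous_pow _) hη fun l => ?_
  have key : |l^(2*(n+1))| * (l^2+η^2)⁻¹ ≤ |l^(2*n)| := by
    rw [_root_.abs_of_nonneg (even_two_mul (n+1) |>.pow_nonneg l),
      _root_.abs_of_nonneg (even_two_mul n |>.pow_nonneg l),
      mul_inv_le_iff₀ (denom_pos hη l)]
    have : l^(2*(n+1)) = l^(2*n) * l^2 := by ring
    nlinarith [pow_nonneg (sq_nonneg l) n, sq_nonneg l, sq_nonneg η,
      even_two_mul n |>.pow_nonneg l]
  exact key

lemma int_odd_pow_mul_inv {n : ℕ} (hn : Integrable (fun l : ℝ => l^(2*n)) ρ) {η : ℝ}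
    (hη : η ≠ 0) : Integrable (fun l : ℝ => l^(2*n+1) * (l^2 + η^2)⁻¹) ρ := by
  refine int_mul_inv (hn.const_mul (2*|η|)⁻¹) (continuous_pow _) hη fun l => ?_
  have hη' : (0:ℝ) < |η| := _root_.abs_pos.mpr hη
  have habs : |l| * (l^2+η^2)⁻¹ ≤ (2*|η|)⁻¹ := by
    rw [mul_inv_le_iff₀ (denom_pos hη l)]
    have hd : (2 * |η|) * |l| ≤ l^2+η^2 := by
      nlinarith [sq_nonneg (|l| - |η|), _root_.sq_abs l, _root_.sq_abs η]
    calc |l| = (2*|η|)⁻¹ * ((2 * |η|) * |l|) := by field_simp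
      _ ≤ (2*|η|)⁻¹ * (l^2 + η^2) := mul_le_mul_of_nonneg_left hd (by positivity)
  have habs2 : |l^(2*n+1)| = |l^(2*n)| * |l| := by rw [← _root_.abs_mul, ← pow_succ]
  calc |l^(2*n+1)| * (l^2+η^2)⁻¹ = |l^(2*n)| * (|l| * (l^2+η^2)⁻¹) := by
        rw [habs2, mul_assoc]
    _ ≤ |l^(2*n)| * (2*|η|)⁻¹ := mul_le_mul_of_nonneg_left habs (_root_.abs_nonneg _)
    _ = |(2*|η|)⁻¹ * l^(2*n)| := by
        rw [_root_.abs_mul, _root_.abs_of_nonneg (by positivity : (0:ℝ) ≤ (2*|η|)⁻¹), mul_comm]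
    _ ≤ |(2*|η|)⁻¹ * l^(2*n)| := le_rfl

end MeasureLemmas
section Convergence

variable {ρ : Measure ℝ}

lemma tendsto_ratio_one (l : ℝ) :
    Tendsto (fun η : ℝ => η^2 * (l^2+η^2)⁻¹) atTop (nhds 1) := by
  have h0 : Tendsto (fun x : ℝ => x^2) atTop atTop := tendsto_pow_atTop two_ne_zero
  have h0' : Tendsto (fun η : ℝ => ((η^2)⁻¹ : ℝ)) atTop (nhds 0) := h0.inv_tendsto_atTop
  have h1 : Tendsto (fun η : ℝ => l^2 * (η^2)⁻¹ + 1) atTop (nhds (l^2 * 0 + 1)) :=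
    (h0'.const_mul (l^2)).add_const 1
  rw [mul_zero, zero_add] at h1
  have h2 := h1.inv₀ one_ne_zero
  rw [inv_one] at h2
  apply h2.congr'
  filter_upwards [eventually_ge_atTop (1:ℝ)] with η hη
  have hη0 : η ≠ 0 := by linarith
  have h3 : l^2 + η^2 ≠ 0 := (denom_pos hη0 l).ne'
  have hη2 : (η:ℝ)^2 ≠ 0 := by positivity
  rw [eq_comm]
  field_simp

/-- dominated convergence: `∫ η² g(l)/(l²+η²) dρ → ∫ g dρ`. -/
lemma tendsto_eta_sq_integral {g : ℝ → ℝ} (hg : Integrable g ρ) (hgc : Continuous g) :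
    Tendsto (fun η : ℝ => ∫ l, η^2 * (g l * (l^2+η^2)⁻¹) ∂ρ) atTop (nhds (∫ l, g l ∂ρ)) := by
  apply tendsto_integral_filter_of_dominated_convergence (fun l => |g l|)
  · filter_upwards [eventually_ge_atTop (1:ℝ)] with η hη
    have hη0 : η ≠ 0 := by linarith
    exact (continuous_const.mul (hgc.mul (cont_inv hη0))).aestronglyMeasurable
  · filter_upwards [eventually_ge_atTop (1:ℝ)] with η hη
    refine Eventually.of_forall fun l => ?_
    have hη0 : η ≠ 0 := by linarith
    rw [Real.norm_eq_abs]
    calc |η^2 * (g l * (l^2+η^2)⁻¹)| = |g l| * (η^2 * (l^2+η^2)⁻¹) := by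
          rw [_root_.abs_mul, _root_.abs_mul, _root_.abs_of_nonneg (sq_nonneg η),
            _root_.abs_of_nonneg (inv_pos.mpr (denom_pos hη0 l)).le]
          ring
      _ ≤ |g l| * 1 := mul_le_mul_of_nonneg_left (ratio_le_one hη0) (_root_.abs_nonneg _)
      _ = |g l| := mul_one _
  · exact hg.abs
  · refine Eventually.of_forall fun l => ?_
    have h := (tendsto_ratio_one l).const_mul (g l)
    rw [mul_one] at h
    refine Tendsto.congr (fun η => by ring) h

/-- integrals `∫ g(l)/(l²+η²) dρ → 0` under a uniform domination for `η ≥ 1`. -/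
lemma tendsto_integral_inv_zero {g b : ℝ → ℝ} (hb : Integrable b ρ) (hgc : Continuous g)
    (hbd : ∀ l : ℝ, ∀ η : ℝ, 1 ≤ η → |g l * (l^2+η^2)⁻¹| ≤ |b l|) :
    Tendsto (fun η : ℝ => ∫ l, g l * (l^2+η^2)⁻¹ ∂ρ) atTop (nhds 0) := by
  have h0 : (0:ℝ) = ∫ l : ℝ, (0:ℝ) ∂ρ := by simp
  rw [h0]
  apply tendsto_integral_filter_of_dominated_convergence (fun l => |b l|)
  · filter_upwards [eventually_ge_atTop (1:ℝ)] with η hη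
    have hη0 : η ≠ 0 := by linarith
    exact (hgc.mul (cont_inv hη0)).aestronglyMeasurable
  · filter_upwards [eventually_ge_atTop (1:ℝ)] with η hη
    exact Eventually.of_forall fun l => by
      rw [Real.norm_eq_abs]; exact hbd l η hη
  · exact hb.abs
  · refine Eventually.of_forall fun l => ?_
    have hd : Tendsto (fun η : ℝ => l^2 + η^2) atTop atTop :=
      tendsto_atTop_add_const_left _ _ (tendsto_pow_atTop two_ne_zero)
    have := (hd.inv_tendsto_atTop).const_mul (g l)
    rw [mul_zero] at this
    exact this

/-- monotone convergence: an eventual bound on `∫ η² g/(l²+η²)` gives integrability of `g`. -/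
lemma integrable_of_eventual_bound {g : ℝ → ℝ} (hgc : Continuous g) (hg0 : ∀ l, 0 ≤ g l)
    (hint : ∀ η : ℝ, η ≠ 0 → Integrable (fun l => g l * (l^2+η^2)⁻¹) ρ)
    {C : ℝ} (hC : ∀ᶠ η in atTop, ∫ l, η^2 * (g l * (l^2+η^2)⁻¹) ∂ρ ≤ C) :
    Integrable g ρ := by
  obtain ⟨η₀, hη₀⟩ := eventually_atTop.mp (hC.and (eventually_ge_atTop 1))
  set φ : ℕ → ℝ := fun n => max η₀ 1 + n with hφdef
  have hφ1 : ∀ n, 1 ≤ φ n := fun n =>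
    le_add_of_le_of_nonneg (le_max_right _ _) (Nat.cast_nonneg n)
  have hφ0 : ∀ n, φ n ≠ 0 := fun n => by have := hφ1 n; intro h; rw [h] at this; linarith
  have hφη₀ : ∀ n, η₀ ≤ φ n := fun n =>
    le_add_of_le_of_nonneg (le_max_left _ _) (Nat.cast_nonneg n)
  set Fn : ℕ → ℝ → ENNReal :=
    fun n l => ENNReal.ofReal ((φ n)^2 * (g l * (l^2+(φ n)^2)⁻¹)) with hFndef
  have hmeas : ∀ n, Measurable (Fn n) := fun n =>
    ((continuous_const.mul (hgc.mul (cont_inv (hφ0 n)))).measurable).ennreal_ofReal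
  have hmono : Monotone Fn := by
    intro a b hab
    intro l
    apply ENNReal.ofReal_le_ofReal
    have h1 : φ a ≤ φ b := by
      simp only [hφdef]
      exact add_le_add le_rfl (Nat.cast_le.mpr hab)
    have h0a : (0:ℝ) ≤ φ a := le_trans zero_le_one (hφ1 a)
    have h2 : (φ a)^2 * (l^2+(φ a)^2)⁻¹ ≤ (φ b)^2 * (l^2+(φ b)^2)⁻¹ := by
      rw [← div_eq_mul_inv, ← div_eq_mul_inv,
        div_le_div_iff₀ (denom_pos (hφ0 a) l) (denom_pos (hφ0 b) l)]
      nlinarith [sq_nonneg l, mul_le_mul h1 h1 h0a (le_trans h0a h1)]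
    calc (φ a)^2 * (g l * (l^2+(φ a)^2)⁻¹) = g l * ((φ a)^2 * (l^2+(φ a)^2)⁻¹) := by ring
      _ ≤ g l * ((φ b)^2 * (l^2+(φ b)^2)⁻¹) := mul_le_mul_of_nonneg_left h2 (hg0 l)
      _ = (φ b)^2 * (g l * (l^2+(φ b)^2)⁻¹) := by ring
  have hbound : ∀ n, ∫⁻ l, Fn n l ∂ρ ≤ ENNReal.ofReal C := by
    intro n
    have hi : Integrable (fun l => (φ n)^2 * (g l * (l^2+(φ n)^2)⁻¹)) ρ := by
      have := (hint (φ n) (hφ0 n)).const_mul ((φ n)^2)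
      simpa [mul_assoc] using this
    have hnn : 0 ≤ᵐ[ρ] fun l => (φ n)^2 * (g l * (l^2+(φ n)^2)⁻¹) :=
      Eventually.of_forall fun l => by
        have := hg0 l
        have := (inv_pos.mpr (denom_pos (hφ0 n) l)).le
        positivity
    rw [hFndef]
    rw [← ofReal_integral_eq_lintegral_ofReal hi hnn]
    exact ENNReal.ofReal_le_ofReal (hη₀ (φ n) (hφη₀ n)).1
  have hsup : ∀ l, (⨆ n, Fn n l) = ENNReal.ofReal (g l) := by
    intro l
    have hφt : Tendsto φ atTop atTop :=
      tendsto_atTop_add_const_left _ _ tendsto_natCast_atTop_atTop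
    have h1 : Tendsto (fun n => (φ n)^2 * (g l * (l^2+(φ n)^2)⁻¹)) atTop (nhds (g l)) := by
      have h2 := ((tendsto_ratio_one l).comp hφt).const_mul (g l)
      rw [mul_one] at h2
      exact h2.congr fun n => by simp [Function.comp]; ring
    exact tendsto_nhds_unique
      (tendsto_atTop_iSup (fun a b hab => hmono hab l))
      (ENNReal.tendsto_ofReal h1)
  have hkey : ∫⁻ l, ENNReal.ofReal (g l) ∂ρ ≤ ENNReal.ofReal C := by
    have := lintegral_iSup (μ := ρ) hmeas hmono
    rw [show (fun l => ⨆ n, Fn n l) = fun l => ENNReal.ofReal (g l) from funext hsup] at this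
    rw [this]
    exact iSup_le hbound
  refine ⟨hgc.aestronglyMeasurable, ?_⟩
  rw [hasFiniteIntegral_iff_ofReal (Eventually.of_forall hg0)]
  exact lt_of_le_of_lt hkey ENNReal.ofReal_lt_top

end Convergence
section Moments

variable {ρ : Measure ℝ}

lemma even_pow_nonneg (n : ℕ) (l : ℝ) : 0 ≤ l^(2*n) := (even_two_mul n).pow_nonneg l

lemma Hm_eta_sq (n : ℕ) (η : ℝ) :
    η^2 * Hm ρ n η = ∫ l, η^2 * (l^(2*n) * (l^2+η^2)⁻¹) ∂ρ := by
  rw [Hm, integral_const_mul]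

lemma Em_eta_sq (n : ℕ) (η : ℝ) :
    η^2 * Em ρ n η = ∫ l, η^2 * (l^(2*n+1) * (l^2+η^2)⁻¹) ∂ρ := by
  rw [Em, integral_const_mul]

lemma Hm_rec {n : ℕ} (hn : Integrable (fun l : ℝ => l^(2*n)) ρ) {η : ℝ} (hη : η ≠ 0) :
    (∫ l, l^(2*n) ∂ρ) - η^2 * Hm ρ n η = Hm ρ (n+1) η := by
  rw [Hm_eta_sq, Hm, ← integral_sub hn (by
    have := (int_pow_mul_inv hn hη).const_mul (η^2)
    simpa [mul_assoc] using this)]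
  refine integral_congr_ae (Eventually.of_forall fun l => ?_)
  have h1 : l^2 + η^2 ≠ 0 := (denom_pos hη l).ne'
  field_simp
  ring

lemma tendsto_Hm (hn : Integrable (fun l : ℝ => l^(2*n)) ρ) :
    Tendsto (fun η => η^2 * Hm ρ n η) atTop (nhds (∫ l, l^(2*n) ∂ρ)) := by
  have h := tendsto_eta_sq_integral hn (continuous_pow (2*n))
  exact h.congr fun η => (Hm_eta_sq n η).symm

/-- moments up to `2(n+d)` give an expansion of `η² Hm n` to order `d`. -/
lemma HE_Hm (hρ : Integrable (fun l : ℝ => 1 / (1 + l ^ 2)) ρ) :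
    ∀ (d n : ℕ), (∀ k, k ≤ n + d → Integrable (fun l : ℝ => l^(2*k)) ρ) →
      HE (fun η => η^2 * Hm ρ n η) d := by
  intro d
  induction d with
  | zero =>
    intro n h
    refine ⟨∫ l, l^(2*n) ∂ρ, ?_⟩
    filter_upwards [eventually_ge_atTop (1:ℝ)] with η hη
    have hη0 : η ≠ 0 := by linarith
    have hnn : 0 ≤ η^2 * Hm ρ n η := by
      rw [Hm_eta_sq]
      refine integral_nonneg fun l => ?_
      have := even_pow_nonneg n l
      have := (inv_pos.mpr (denom_pos hη0 l)).le
      positivity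
    rw [_root_.abs_of_nonneg hnn, Hm_eta_sq]
    refine integral_mono (by
        have := (int_pow_mul_inv (h n (by omega)) hη0).const_mul (η^2)
        simpa [mul_assoc] using this) (h n (by omega)) fun l => ?_
    calc η^2 * (l^(2*n) * (l^2+η^2)⁻¹) = l^(2*n) * (η^2 * (l^2+η^2)⁻¹) := by ring
      _ ≤ l^(2*n) * 1 := mul_le_mul_of_nonneg_left (ratio_le_one hη0) (even_pow_nonneg n l)
      _ = l^(2*n) := mul_one _
  | succ d ih =>
    intro n h
    refine ⟨∫ l, l^(2*n) ∂ρ, tendsto_Hm (h n (by omega)), ?_⟩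
    refine HE.congr ?_ (ih (n+1) (fun k hk => h k (by omega))).neg
    filter_upwards [eventually_ge_atTop (1:ℝ)] with η hη
    have hη0 : η ≠ 0 := by linarith
    have := Hm_rec (h n (by omega)) (η := η) hη0
    nlinarith [this]

/-- converse: an expansion of `η² Hm n` to order `d` gives moments up to `2(n+d)`. -/
lemma moments_of_HE_Hm (hρ : Integrable (fun l : ℝ => 1 / (1 + l ^ 2)) ρ) :
    ∀ (d n : ℕ), Integrable (fun l : ℝ => l^(2*n)) ρ →
      HE (fun η => η^2 * Hm ρ n η) d →
      ∀ j ≤ d, Integrable (fun l : ℝ => l^(2*(n+j))) ρ := by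
  intro d
  induction d with
  | zero =>
    intro n hn _ j hj
    interval_cases j
    simpa using hn
  | succ d ih =>
    intro n hn hHE j hj
    obtain ⟨c, hc, h'⟩ := hHE
    have hcs : c = ∫ l, l^(2*n) ∂ρ := tendsto_nhds_unique hc (tendsto_Hm hn)
    have h2 : HE (fun η => η^2 * Hm ρ (n+1) η) d := by
      refine HE.congr ?_ h'.neg
      filter_upwards [eventually_ge_atTop (1:ℝ)] with η hη
      have hη0 : η ≠ 0 := by linarith
      have := Hm_rec hn (η := η) hη0
      rw [hcs]
      nlinarith [this]
    have hint2 : Integrable (fun l : ℝ => l^(2*(n+1))) ρ := by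
      obtain ⟨C, hC⟩ := h2.bounded
      refine integrable_of_eventual_bound (C := C) (continuous_pow _) (even_pow_nonneg (n+1))
        (fun η hη => by
          have := int_pow_succ_mul_inv hn hη
          simpa using this) ?_
      filter_upwards [hC] with η hη
      rw [← Hm_eta_sq]
      exact (le_abs_self _).trans hη
    rcases Nat.eq_zero_or_pos j with hj0 | hjpos
    · subst hj0; simpa using hn
    · obtain ⟨j', rfl⟩ := Nat.exists_eq_succ_of_ne_zero hjpos.ne'
      have := ih (n+1) hint2 h2 j' (by omega)
      have hee : 2*(n+1+j') = 2*(n+(j'+1)) := by omega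
      rw [hee] at this
      exact this

/-- odd moments are integrable between even ones -/
lemma int_odd_pow {n : ℕ} (h0 : Integrable (fun l : ℝ => l^(2*n)) ρ)
    (h2 : Integrable (fun l : ℝ => l^(2*(n+1))) ρ) :
    Integrable (fun l : ℝ => l^(2*n+1)) ρ := by
  refine Integrable.mono (h0.add h2) ((continuous_pow _).aestronglyMeasurable)
    (Eventually.of_forall fun l => ?_)
  simp only [Pi.add_apply]
  rw [Real.norm_eq_abs, Real.norm_eq_abs, _root_.abs_pow]
  have hsum : 0 ≤ l^(2*n) + l^(2*(n+1)) :=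
    add_nonneg (even_pow_nonneg n l) (even_pow_nonneg (n+1) l)
  rw [_root_.abs_of_nonneg hsum]
  have he : ∀ m : ℕ, |l|^(2*m) = l^(2*m) := fun m => by
    rw [← _root_.abs_pow, _root_.abs_of_nonneg (even_pow_nonneg m l)]
  rcases le_or_gt |l| 1 with hl | hl
  · calc |l|^(2*n+1) ≤ |l|^(2*n) :=
        pow_le_pow_of_le_one (_root_.abs_nonneg l) hl (by omega)
      _ = l^(2*n) := he n
      _ ≤ l^(2*n) + l^(2*(n+1)) := le_add_of_nonneg_right (even_pow_nonneg (n+1) l)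
  · calc |l|^(2*n+1) ≤ |l|^(2*(n+1)) := pow_le_pow_right₀ hl.le (by omega)
      _ = l^(2*(n+1)) := he (n+1)
      _ ≤ l^(2*n) + l^(2*(n+1)) := le_add_of_nonneg_left (even_pow_nonneg n l)

lemma int_Em_succ {n : ℕ} (hodd : Integrable (fun l : ℝ => l^(2*n+1)) ρ) {η : ℝ}
    (hη : η ≠ 0) : Integrable (fun l : ℝ => l^(2*(n+1)+1) * (l^2+η^2)⁻¹) ρ := by
  refine int_mul_inv hodd (continuous_pow _) hη fun l => ?_
  have h1 : |l^(2*(n+1)+1)| * (l^2+η^2)⁻¹ = |l^(2*n+1)| * (l^2 * (l^2+η^2)⁻¹) := by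
    have : |l^(2*(n+1)+1)| = |l^(2*n+1)| * l^2 := by
      rw [← abs_sq l, ← _root_.abs_mul]
      congr 1
      ring
    rw [this, mul_assoc]
  rw [h1]
  have h2 : l^2 * (l^2+η^2)⁻¹ ≤ 1 := by
    rw [mul_inv_le_iff₀ (denom_pos hη l), one_mul]
    nlinarith [sq_nonneg η]
  calc |l^(2*n+1)| * (l^2 * (l^2+η^2)⁻¹) ≤ |l^(2*n+1)| * 1 :=
      mul_le_mul_of_nonneg_left h2 (_root_.abs_nonneg _)
    _ = |l^(2*n+1)| := mul_one _

lemma Em_rec {n : ℕ} (h0 : Integrable (fun l : ℝ => l^(2*n)) ρ)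
    (hodd : Integrable (fun l : ℝ => l^(2*n+1)) ρ) {η : ℝ} (hη : η ≠ 0) :
    (∫ l, l^(2*n+1) ∂ρ) - η^2 * Em ρ n η = Em ρ (n+1) η := by
  rw [Em_eta_sq, Em, ← integral_sub hodd (by
    have := (int_odd_pow_mul_inv h0 hη).const_mul (η^2)
    simpa [mul_assoc] using this)]
  refine integral_congr_ae (Eventually.of_forall fun l => ?_)
  have h1 : l^2 + η^2 ≠ 0 := (denom_pos hη l).ne'
  field_simp
  ring

lemma tendsto_Em {n : ℕ} (hodd : Integrable (fun l : ℝ => l^(2*n+1)) ρ) :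
    Tendsto (fun η => η^2 * Em ρ n η) atTop (nhds (∫ l, l^(2*n+1) ∂ρ)) := by
  have h := tendsto_eta_sq_integral hodd (continuous_pow (2*n+1))
  exact h.congr fun η => (Em_eta_sq n η).symm

/-- moments up to `2(n+d+1)` give an expansion of `η² Em n` to order `d`. -/
lemma HE_Em (hρ : Integrable (fun l : ℝ => 1 / (1 + l ^ 2)) ρ) :
    ∀ (d n : ℕ), (∀ k, k ≤ n + d + 1 → Integrable (fun l : ℝ => l^(2*k)) ρ) →
      HE (fun η => η^2 * Em ρ n η) d := by
  intro d
  induction d with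
  | zero =>
    intro n h
    have hodd : Integrable (fun l : ℝ => l^(2*n+1)) ρ :=
      int_odd_pow (h n (by omega)) (h (n+1) (by omega))
    refine ⟨∫ l, |l^(2*n+1)| ∂ρ, ?_⟩
    filter_upwards [eventually_ge_atTop (1:ℝ)] with η hη
    have hη0 : η ≠ 0 := by linarith
    rw [Em_eta_sq]
    calc |∫ l, η^2 * (l^(2*n+1) * (l^2+η^2)⁻¹) ∂ρ|
        ≤ ∫ l, |η^2 * (l^(2*n+1) * (l^2+η^2)⁻¹)| ∂ρ := by
          exact
            norm_integral_le_integral_norm (fun l : ℝ => η^2 * (l^(2*n+1) * (l^2+η^2)⁻¹)) (μ := ρ)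
      _ ≤ ∫ l, |l^(2*n+1)| ∂ρ := by
          refine integral_mono (by
            have := ((int_odd_pow_mul_inv (h n (by omega)) hη0).const_mul (η^2)).abs
            simpa [mul_assoc] using this) hodd.abs fun l => ?_
          calc |η^2 * (l^(2*n+1) * (l^2+η^2)⁻¹)|
              = |l^(2*n+1)| * (η^2 * (l^2+η^2)⁻¹) := by
                rw [_root_.abs_mul, _root_.abs_mul, _root_.abs_of_nonneg (sq_nonneg η),
                  _root_.abs_of_nonneg (inv_pos.mpr (denom_pos hη0 l)).le]
                ring
            _ ≤ |l^(2*n+1)| * 1 :=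
                mul_le_mul_of_nonneg_left (ratio_le_one hη0) (_root_.abs_nonneg _)
            _ = |l^(2*n+1)| := mul_one _
  | succ d ih =>
    intro n h
    have hodd : Integrable (fun l : ℝ => l^(2*n+1)) ρ :=
      int_odd_pow (h n (by omega)) (h (n+1) (by omega))
    refine ⟨∫ l, l^(2*n+1) ∂ρ, tendsto_Em hodd, ?_⟩
    refine HE.congr ?_ (ih (n+1) (fun k hk => h k (by omega))).neg
    filter_upwards [eventually_ge_atTop (1:ℝ)] with η hη
    have hη0 : η ≠ 0 := by linarith
    have := Em_rec (h n (by omega)) hodd (η := η) hη0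
    nlinarith [this]

/-- packaging: all absolute moments up to `2N` versus even moments up to `N`. -/
lemma moments_package (N : ℕ) :
    (∀ j ≤ 2*N, Integrable (fun l : ℝ => |l|^j) ρ) ↔
      (∀ k ≤ N, Integrable (fun l : ℝ => l^(2*k)) ρ) := by
  have habs : ∀ (m : ℕ) (l : ℝ), |l|^(2*m) = l^(2*m) := fun m l => by
    rw [← _root_.abs_pow, _root_.abs_of_nonneg (even_pow_nonneg m l)]
  constructor
  · intro h k hk
    have := h (2*k) (by omega)
    exact this.congr (Eventually.of_forall fun l => habs k l)
  · intro h j hj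
    refine Integrable.mono ((h 0 (by omega)).add (h N le_rfl))
      ((_root_.continuous_abs.pow j).aestronglyMeasurable) (Eventually.of_forall fun l => ?_)
    have hsum : (0:ℝ) ≤ l^(2*0) + l^(2*N) :=
      add_nonneg (even_pow_nonneg 0 l) (even_pow_nonneg N l)
    simp only [Pi.add_apply]
    rw [Real.norm_eq_abs, Real.norm_eq_abs, _root_.abs_pow, _root_.abs_abs, _root_.abs_of_nonneg hsum]
    have h00 : l^(2*0) = (1:ℝ) := by norm_num
    rcases le_or_gt |l| 1 with hl | hl
    · calc |l|^j ≤ 1 := pow_le_one₀ (_root_.abs_nonneg l) hl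
        _ ≤ l^(2*0) + l^(2*N) := by rw [h00]; linarith [even_pow_nonneg N l]
    · calc |l|^j ≤ |l|^(2*N) := pow_le_pow_right₀ hl.le hj
        _ = l^(2*N) := habs N l
        _ ≤ l^(2*0) + l^(2*N) := by rw [h00]; linarith

end Moments
section ComplexSide

variable {ρ : Measure ℝ} {η : ℝ}

/-- real part of the Herglotz integrand at `z = iη` -/
noncomputable def uRe (η l : ℝ) : ℝ := l/(l^2+η^2) - l/(1+l^2)
/-- imaginary part of the Herglotz integrand at `z = iη` -/
noncomputable def uIm (η l : ℝ) : ℝ := η*(l^2+η^2)⁻¹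

lemma Ieta_im (η : ℝ) : (Complex.I * (η:ℂ)).im = η := by simp

lemma sub_Ieta_ne (hη : η ≠ 0) (l : ℝ) : (l:ℂ) - Complex.I*(η:ℂ) ≠ 0 := by
  intro h
  apply hη
  have := congrArg Complex.im h
  simpa using this

lemma one_add_sq_ne (l : ℝ) : (1:ℂ) + (l:ℂ)^2 ≠ 0 := by
  have h : ((1+l^2 : ℝ):ℂ) ≠ 0 := Complex.ofReal_ne_zero.mpr (by positivity)
  intro hc
  apply h
  rw [← hc]
  push_cast
  ring

lemma second_term_eq (l : ℝ) : (l:ℂ)/(1+(l:ℂ)^2) = ((l/(1+l^2) : ℝ):ℂ) := by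
  push_cast
  ring

lemma integrand_re (hη : η ≠ 0) (l : ℝ) :
    ((((l:ℂ) - Complex.I*(η:ℂ))⁻¹ - (l:ℂ)/(1+(l:ℂ)^2))).re = uRe η l := by
  rw [Complex.sub_re, Complex.inv_re, second_term_eq, Complex.ofReal_re]
  have h1 : ((l:ℂ) - Complex.I*(η:ℂ)).re = l := by simp
  have h2 : ((l:ℂ) - Complex.I*(η:ℂ)).im = -η := by simp
  rw [Complex.normSq_apply, h1, h2, uRe]
  ring_nf

lemma integrand_im (hη : η ≠ 0) (l : ℝ) :
    ((((l:ℂ) - Complex.I*(η:ℂ))⁻¹ - (l:ℂ)/(1+(l:ℂ)^2))).im = uIm η l := by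
  rw [Complex.sub_im, Complex.inv_im, second_term_eq, Complex.ofReal_im]
  have h1 : ((l:ℂ) - Complex.I*(η:ℂ)).re = l := by simp
  have h2 : ((l:ℂ) - Complex.I*(η:ℂ)).im = -η := by simp
  rw [Complex.normSq_apply, h1, h2, uIm]
  ring_nf

lemma integrand_eq (hη : η ≠ 0) (l : ℝ) :
    ((l:ℂ) - Complex.I*(η:ℂ))⁻¹ - (l:ℂ)/(1+(l:ℂ)^2)
      = ((uRe η l : ℝ):ℂ) + ((uIm η l : ℝ):ℂ) * Complex.I := by
  rw [← integrand_re hη l, ← integrand_im hη l, Complex.re_add_im]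

lemma abs_l_ratio (hη : η ≠ 0) (l : ℝ) : |l| * (l^2+η^2)⁻¹ ≤ (2*|η|)⁻¹ := by
  have hη' : (0:ℝ) < |η| := _root_.abs_pos.mpr hη
  rw [mul_inv_le_iff₀ (denom_pos hη l)]
  have hd : (2 * |η|) * |l| ≤ l^2+η^2 := by
    nlinarith [sq_nonneg (|l| - |η|), _root_.sq_abs l, _root_.sq_abs η]
  calc |l| = (2*|η|)⁻¹ * ((2 * |η|) * |l|) := by field_simp
    _ ≤ (2*|η|)⁻¹ * (l^2 + η^2) := mul_le_mul_of_nonneg_left hd (by positivity)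

lemma uRe_integrable (hρ : Integrable (fun l : ℝ => 1 / (1 + l ^ 2)) ρ) (hη : η ≠ 0) :
    Integrable (uRe η) ρ := by
  have hη' : (0:ℝ) < |η| := _root_.abs_pos.mpr hη
  have hcont : Continuous (uRe η) := by
    apply Continuous.sub
    · exact continuous_id.mul (cont_inv hη)
    · exact continuous_id.div (by continuity) (fun l => by positivity)
  refine Integrable.mono (hρ.const_mul ((1+η^2) * (2*|η|)⁻¹)) hcont.aestronglyMeasurable
    (Eventually.of_forall fun l => ?_)
  have h1 : (0:ℝ) < 1 + l^2 := by positivity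
  have key : |uRe η l| ≤ (1+η^2) * (2*|η|)⁻¹ * (1/(1+l^2)) := by
    have heq : uRe η l = l*(1-η^2) * ((l^2+η^2)⁻¹ * (1+l^2)⁻¹) := by
      rw [uRe]
      field_simp
      ring
    rw [heq, _root_.abs_mul, _root_.abs_mul, _root_.abs_mul, _root_.abs_inv, _root_.abs_inv,
      _root_.abs_of_nonneg (denom_pos hη l).le, _root_.abs_of_nonneg h1.le, one_div]
    have h5 : |1-η^2| ≤ 1+η^2 := by
      rw [_root_.abs_le]; constructor <;> nlinarith [sq_nonneg η]
    have h6 := abs_l_ratio hη l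
    have h7 : (0:ℝ) ≤ (1+l^2)⁻¹ := by positivity
    calc |l| * |1-η^2| * ((l^2+η^2)⁻¹ * (1+l^2)⁻¹)
        = (|l| * (l^2+η^2)⁻¹) * |1-η^2| * (1+l^2)⁻¹ := by ring
      _ ≤ ((2*|η|)⁻¹) * (1+η^2) * (1+l^2)⁻¹ := by
          apply mul_le_mul_of_nonneg_right _ h7
          exact mul_le_mul h6 h5 (_root_.abs_nonneg _) (by positivity)
      _ = (1+η^2) * (2*|η|)⁻¹ * (1+l^2)⁻¹ := by ring
  calc ‖uRe η l‖ = |uRe η l| := rfl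
    _ ≤ (1+η^2) * (2*|η|)⁻¹ * (1/(1+l^2)) := key
    _ ≤ ‖(1+η^2) * (2*|η|)⁻¹ * (1/(1+l^2))‖ := le_abs_self _

lemma uIm_integrable (hρ : Integrable (fun l : ℝ => 1 / (1 + l ^ 2)) ρ) (hη : η ≠ 0) :
    Integrable (uIm η) ρ := (int_inv hρ hη).const_mul η

lemma integrand_integrable (hρ : Integrable (fun l : ℝ => 1 / (1 + l ^ 2)) ρ) (hη : η ≠ 0) :
    Integrable (fun l : ℝ => ((l:ℂ) - Complex.I*(η:ℂ))⁻¹ - (l:ℂ)/(1+(l:ℂ)^2)) ρ := by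
  have : (fun l : ℝ => ((l:ℂ) - Complex.I*(η:ℂ))⁻¹ - (l:ℂ)/(1+(l:ℂ)^2))
      = fun l => ((uRe η l : ℝ):ℂ) + ((uIm η l : ℝ):ℂ) * Complex.I :=
    funext fun l => integrand_eq hη l
  rw [this]
  exact ((uRe_integrable hρ hη).ofReal).add (((uIm_integrable hρ hη).ofReal).mul_const _)

lemma rep_im {m : ℂ → ℂ} {a b : ℝ} (hrep : HerglotzRep m a b ρ) (hη : 0 < η) :
    (m (Complex.I*(η:ℂ))).im = b*η + η * Hm ρ 0 η := by
  rw [hrep.2.2 _ (by rw [Ieta_im]; exact hη.ne')]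
  rw [Complex.add_im, Complex.add_im]
  have hint := integrand_integrable hrep.2.1 hη.ne'
  have him2 : (∫ l, (((l:ℂ) - Complex.I*(η:ℂ))⁻¹ - (l:ℂ)/(1+(l:ℂ)^2)) ∂ρ).im
      = ∫ l, (((l:ℂ) - Complex.I*(η:ℂ))⁻¹ - (l:ℂ)/(1+(l:ℂ)^2)).im ∂ρ :=
    (integral_im hint).symm
  rw [him2]
  have h1 : ∫ l, (((l:ℂ) - Complex.I*(η:ℂ))⁻¹ - (l:ℂ)/(1+(l:ℂ)^2)).im ∂ρ
      = η * Hm ρ 0 η := by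
    rw [Hm, ← integral_const_mul]
    refine integral_congr_ae (Eventually.of_forall fun l => ?_)
    show (((l:ℂ) - Complex.I*(η:ℂ))⁻¹ - (l:ℂ)/(1+(l:ℂ)^2)).im = η * (l^(2*0) * (l^2+η^2)⁻¹)
    rw [integrand_im hη.ne', uIm]
    norm_num
  rw [h1]
  simp [Complex.mul_im]

lemma rep_re {m : ℂ → ℂ} {a b : ℝ} (hrep : HerglotzRep m a b ρ) (hη : 0 < η) :
    (m (Complex.I*(η:ℂ))).re = a + ∫ l, uRe η l ∂ρ := by
  rw [hrep.2.2 _ (by rw [Ieta_im]; exact hη.ne')]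
  rw [Complex.add_re, Complex.add_re]
  have hint := integrand_integrable hrep.2.1 hη.ne'
  have hre2 : (∫ l, (((l:ℂ) - Complex.I*(η:ℂ))⁻¹ - (l:ℂ)/(1+(l:ℂ)^2)) ∂ρ).re
      = ∫ l, (((l:ℂ) - Complex.I*(η:ℂ))⁻¹ - (l:ℂ)/(1+(l:ℂ)^2)).re ∂ρ :=
    (integral_re hint).symm
  rw [hre2]
  have h1 : ∫ l, (((l:ℂ) - Complex.I*(η:ℂ))⁻¹ - (l:ℂ)/(1+(l:ℂ)^2)).re ∂ρ
      = ∫ l, uRe η l ∂ρ :=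
    integral_congr_ae (Eventually.of_forall fun l => integrand_re hη.ne' l)
  rw [h1]
  simp [Complex.mul_re]

lemma int_l_div (hfin : Integrable (fun l : ℝ => l^(2*0)) ρ) :
    Integrable (fun l : ℝ => l/(1+l^2)) ρ := by
  refine Integrable.mono (hfin.const_mul (1/2))
    (continuous_id.div (by continuity) (fun l => by positivity)).aestronglyMeasurable
    (Eventually.of_forall fun l => ?_)
  have h1 : (0:ℝ) < 1 + l^2 := by positivity
  rw [Real.norm_eq_abs, Real.norm_eq_abs, _root_.abs_div, _root_.abs_of_nonneg h1.le]
  have h2 : |l| / (1+l^2) ≤ 1/2 := by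
    rw [div_le_iff₀ h1]
    nlinarith [sq_nonneg (|l| - 1), _root_.sq_abs l]
  calc |l|/(1+l^2) ≤ 1/2 := h2
    _ = (1:ℝ)/2 * l^(2*0) := by norm_num
    _ ≤ |1/2 * l^(2*0)| := le_abs_self _

lemma rep_re_split {m : ℂ → ℂ} {a b : ℝ} (hrep : HerglotzRep m a b ρ)
    (hfin : Integrable (fun l : ℝ => l^(2*0)) ρ) (hη : 0 < η) :
    (m (Complex.I*(η:ℂ))).re = (a - ∫ l, l/(1+l^2) ∂ρ) + Em ρ 0 η := by
  rw [rep_re hrep hη]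
  have hint1 : Integrable (fun l : ℝ => l^(2*0+1) * (l^2+η^2)⁻¹) ρ :=
    int_odd_pow_mul_inv hfin hη.ne'
  have h2 : ∫ l, uRe η l ∂ρ = Em ρ 0 η - ∫ l, l/(1+l^2) ∂ρ := by
    rw [Em, ← integral_sub hint1 (int_l_div hfin)]
    refine integral_congr_ae (Eventually.of_forall fun l => ?_)
    rw [uRe]
    norm_num
    rw [div_eq_mul_inv]
  rw [h2]
  ring

end ComplexSide
section Bridge

variable {ρ : Measure ℝ} {η : ℝ}

lemma Hm_nonneg (n : ℕ) (hη : η ≠ 0) : 0 ≤ Hm ρ n η :=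
  integral_nonneg fun l => mul_nonneg (even_pow_nonneg n l)
    (inv_pos.mpr (denom_pos hη l)).le

lemma Ieta_ne (hη : η ≠ 0) : Complex.I * (η:ℂ) ≠ 0 := by
  intro h
  apply hη
  have := congrArg Complex.im h
  simpa using this

lemma normSq_Ieta (η : ℝ) : Complex.normSq (Complex.I*(η:ℂ)) = η^2 := by
  have h1 : (Complex.I*(η:ℂ)).re = 0 := by simp
  rw [Complex.normSq_apply, h1, Ieta_im]
  ring

lemma div_Ieta_re (z : ℂ) (hη : η ≠ 0) : (z/(Complex.I*(η:ℂ))).re = z.im/η := by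
  rw [Complex.div_re]
  have h1 : (Complex.I*(η:ℂ)).re = 0 := by simp
  rw [h1, Ieta_im, normSq_Ieta]
  have : η^2 ≠ 0 := pow_ne_zero _ hη
  field_simp
  ring

/-- `F(η) = Hm ρ 0 η → 0` -/
lemma tendsto_Hm0_zero (hρ : Integrable (fun l : ℝ => 1 / (1 + l ^ 2)) ρ) :
    Tendsto (fun η => Hm ρ 0 η) atTop (nhds 0) := by
  refine tendsto_integral_inv_zero hρ (continuous_pow _) fun l η hη => ?_
  have h1 : (0:ℝ) < 1 + l^2 := by positivity
  have hη0 : η ≠ 0 := by linarith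
  have key : (l^2+η^2)⁻¹ ≤ 1/(1+l^2) := by
    rw [one_div]
    exact inv_anti₀ h1 (by nlinarith)
  rw [_root_.abs_mul]
  calc |l^(2*0)| * |(l^2+η^2)⁻¹| = (l^2+η^2)⁻¹ := by
        rw [_root_.abs_of_nonneg (inv_pos.mpr (denom_pos hη0 l)).le]
        norm_num
    _ ≤ 1/(1+l^2) := key
    _ ≤ |1/(1+l^2)| := le_abs_self _

/-- `Em ρ 0 η → 0` when `ρ` is finite -/
lemma tendsto_Em0_zero (hfin : Integrable (fun l : ℝ => l^(2*0)) ρ) :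
    Tendsto (fun η => Em ρ 0 η) atTop (nhds 0) := by
  refine tendsto_integral_inv_zero (hfin.const_mul (1/2)) (continuous_pow _) fun l η hη => ?_
  have hη0 : η ≠ 0 := by linarith
  have hη1 : (1:ℝ) ≤ |η| := by rw [_root_.abs_of_nonneg (by linarith : (0:ℝ) ≤ η)]; exact hη
  rw [_root_.abs_mul]
  have h2 : |l^(2*0+1)| = |l| := by norm_num
  rw [h2, _root_.abs_of_nonneg (inv_pos.mpr (denom_pos hη0 l)).le]
  calc |l| * (l^2+η^2)⁻¹ ≤ (2*|η|)⁻¹ := abs_l_ratio hη0 l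
    _ ≤ 1/2 := by
        rw [one_div]
        apply inv_anti₀ (by norm_num)
        linarith
    _ = 1/2 * l^(2*0) := by norm_num
    _ ≤ |1/2 * l^(2*0)| := le_abs_self _

/-- boundedness gives finiteness of `ρ` -/
lemma finite_of_bound (hρ : Integrable (fun l : ℝ => 1 / (1 + l ^ 2)) ρ) {C : ℝ}
    (hC : ∀ᶠ η in atTop, η^2 * Hm ρ 0 η ≤ C) :
    Integrable (fun l : ℝ => l^(2*0)) ρ := by
  refine integrable_of_eventual_bound (C := C) (continuous_pow _) (even_pow_nonneg 0)
    (fun η hη => ?_) ?_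
  · refine (int_inv hρ hη).congr (Eventually.of_forall fun l => ?_)
    norm_num
  · filter_upwards [hC] with η hη
    rw [← Hm_eta_sq]
    exact hη

/-- expansion of `Em ρ 0` itself (not `η²`-scaled) -/
lemma HE_Em0 (hρ : Integrable (fun l : ℝ => 1 / (1 + l ^ 2)) ρ) (K : ℕ)
    (h : ∀ k ≤ K, Integrable (fun l : ℝ => l^(2*k)) ρ) :
    HE (fun η => Em ρ 0 η) K := by
  cases K with
  | zero =>
    refine ⟨(1/2) * ∫ l, l^(2*0) ∂ρ, ?_⟩
    filter_upwards [eventually_ge_atTop (1:ℝ)] with η hη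
    have hη0 : η ≠ 0 := by linarith
    have hη1 : (1:ℝ) ≤ |η| := by rw [_root_.abs_of_nonneg (by linarith : (0:ℝ) ≤ η)]; exact hη
    have hint := int_odd_pow_mul_inv (n := 0) (h 0 le_rfl) hη0
    rw [Em]
    calc |∫ l, l^(2*0+1) * (l^2+η^2)⁻¹ ∂ρ| ≤ ∫ l, |l^(2*0+1) * (l^2+η^2)⁻¹| ∂ρ := by
          exact norm_integral_le_integral_norm
            (μ := ρ) (fun l : ℝ => l^(2*0+1) * (l^2+η^2)⁻¹)
      _ ≤ ∫ l, (1/2) * l^(2*0) ∂ρ := by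
          refine integral_mono hint.abs ((h 0 le_rfl).const_mul _) fun l => ?_
          rw [_root_.abs_mul, _root_.abs_of_nonneg (inv_pos.mpr (denom_pos hη0 l)).le]
          have h2 : |l^(2*0+1)| = |l| := by norm_num
          rw [h2]
          calc |l| * (l^2+η^2)⁻¹ ≤ (2*|η|)⁻¹ := abs_l_ratio hη0 l
            _ ≤ 1/2 := by
                rw [one_div]
                apply inv_anti₀ (by norm_num)
                linarith
            _ = 1/2 * l^(2*0) := by norm_num
      _ = (1/2) * ∫ l, l^(2*0) ∂ρ := integral_const_mul _ _
  | succ d =>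
    have h1 : HE (fun η => η^2 * Em ρ 0 η) d := HE_Em hρ d 0 (fun k hk => h k (by omega))
    refine HE.congr ?_ h1.shift
    filter_upwards [eventually_ge_atTop (1:ℝ)] with η hη
    have hη2 : (η:ℝ)^2 ≠ 0 := by positivity
    field_simp

/-- expansion of `Hm ρ 0` (not `η²`-scaled), with constant term 0 -/
lemma HE_Hm0 (hρ : Integrable (fun l : ℝ => 1 / (1 + l ^ 2)) ρ) (K : ℕ)
    (h : ∀ k ≤ K, Integrable (fun l : ℝ => l^(2*k)) ρ) :
    HE (fun η => Hm ρ 0 η) (K+1) := by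
  have h1 : HE (fun η => η^2 * Hm ρ 0 η) K := HE_Hm hρ K 0 (fun k hk => h k (by omega))
  refine HE.congr ?_ h1.shift
  filter_upwards [eventually_ge_atTop (1:ℝ)] with η hη
  have hη2 : (η:ℝ)^2 ≠ 0 := by positivity
  field_simp

end Bridge
/-- squeeze helper: `(η²)⁻¹ * (bounded)² → 0` -/
lemma sq_shift_tendsto_zero {A : ℝ → ℝ} (hA : ∃ C, ∀ᶠ η in atTop, |A η| ≤ C) :
    Tendsto (fun η : ℝ => (η^2)⁻¹ * (A η)^2) atTop (nhds 0) := by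
  obtain ⟨C, hC⟩ := hA
  apply squeeze_zero_norm' (a := fun η : ℝ => C^2 * (η^2)⁻¹)
  · filter_upwards [hC, eventually_ge_atTop (1:ℝ)] with η h1 h2
    have hη2 : (0:ℝ) < η^2 := by positivity
    have hX2 : (A η)^2 ≤ C^2 :=
      sq_le_sq' (neg_le_of_abs_le h1) (le_of_abs_le h1)
    rw [Real.norm_eq_abs, _root_.abs_mul, _root_.abs_inv, _root_.abs_of_nonneg hη2.le,
      _root_.abs_of_nonneg (sq_nonneg (A η))]
    calc (η^2)⁻¹ * (A η)^2 ≤ (η^2)⁻¹ * C^2 := mul_le_mul_of_nonneg_left hX2 (by positivity)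
      _ = C^2 * (η^2)⁻¹ := by ring
  · have h3 : Tendsto (fun η : ℝ => C^2 * (η^2)⁻¹) atTop (nhds (C^2 * 0)) :=
      ((tendsto_pow_atTop two_ne_zero).inv_tendsto_atTop).const_mul _
    simpa using h3

set_option maxHeartbeats 1000000 in
theorem stmt_10 (m₁ m₂ : ℂ → ℂ) (h₁ : IsHerglotz m₁) (h₂ : IsHerglotz m₂)
    (a₁ b₁ a₂ b₂ : ℝ) (ρ₁ ρ₂ : Measure ℝ)
    (hrep₁ : HerglotzRep m₁ a₁ b₁ ρ₁) (hrep₂ : HerglotzRep m₂ a₂ b₂ ρ₂)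
    (hrel : ∀ z : ℂ, z.im ≠ 0 → m₁ z = -(m₂ z)⁻¹)
    (β : ℝ) (hβ : 0 < β)
    (hlim : Tendsto (fun η : ℝ => m₂ (Complex.I * (η : ℂ)) / (Complex.I * (η : ℂ)))
      atTop (nhds (β : ℂ)))
    (K : ℕ) :
    (∀ j ≤ 2 * K, Integrable (fun l : ℝ => |l| ^ j) ρ₂) ↔
      (∀ j ≤ 2 * K + 2, Integrable (fun l : ℝ => |l| ^ j) ρ₁) := by
  have hρ₁ : Integrable (fun l : ℝ => 1 / (1 + l ^ 2)) ρ₁ := hrep₁.2.1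
  have hρ₂ : Integrable (fun l : ℝ => 1 / (1 + l ^ 2)) ρ₂ := hrep₂.2.1
  have hβC : ((β:ℝ):ℂ) ≠ 0 := by exact_mod_cast hβ.ne'
  -- Step A : `b₂ = β`
  have hre_q : ∀ η : ℝ, 0 < η →
      ((m₂ (Complex.I*(η:ℂ)))/(Complex.I*(η:ℂ))).re = b₂ + Hm ρ₂ 0 η := by
    intro η hη
    rw [div_Ieta_re _ hη.ne', rep_im hrep₂ hη]
    field_simp
  have htendsto_re : Tendsto (fun η : ℝ => ((m₂ (Complex.I*(η:ℂ)))/(Complex.I*(η:ℂ))).re)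
      atTop (nhds β) := by
    have h1 := (Complex.continuous_re.tendsto ((β:ℝ):ℂ)).comp hlim
    simpa [Function.comp_def] using h1
  have hb2 : b₂ = β := by
    have h1 : Tendsto (fun η : ℝ => b₂ + Hm ρ₂ 0 η) atTop (nhds (b₂ + 0)) :=
      tendsto_const_nhds.add (tendsto_Hm0_zero hρ₂)
    have h2 : Tendsto (fun η : ℝ => b₂ + Hm ρ₂ 0 η) atTop (nhds β) := by
      apply htendsto_re.congr'
      filter_upwards [eventually_gt_atTop (0:ℝ)] with η hη
      exact hre_q η hη
    have h3 := tendsto_nhds_unique h1 h2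
    linarith
  have hm₂ne : ∀ᶠ η : ℝ in atTop, m₂ (Complex.I*(η:ℂ)) ≠ 0 := by
    have h1 : ∀ᶠ η : ℝ in atTop, m₂ (Complex.I*(η:ℂ))/(Complex.I*(η:ℂ)) ≠ 0 :=
      hlim.eventually_ne hβC
    filter_upwards [h1] with η h hq
    apply h
    rw [hq]
    simp
  have hIm2 : ∀ η : ℝ, 0 < η → (m₂ (Complex.I*(η:ℂ))).im = η * (β + Hm ρ₂ 0 η) := by
    intro η hη
    rw [rep_im hrep₂ hη, hb2]
    ring
  have hIm2_pos : ∀ η : ℝ, 0 < η → β*η ≤ (m₂ (Complex.I*(η:ℂ))).im := by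
    intro η hη
    rw [hIm2 η hη]
    have h2 := Hm_nonneg (ρ := ρ₂) 0 hη.ne'
    nlinarith
  have hrel' : ∀ η : ℝ, 0 < η → m₁ (Complex.I*(η:ℂ)) = -(m₂ (Complex.I*(η:ℂ)))⁻¹ :=
    fun η hη => hrel _ (by rw [Ieta_im]; exact hη.ne')
  have hIm1 : ∀ η : ℝ, 0 < η → (m₁ (Complex.I*(η:ℂ))).im
      = (m₂ (Complex.I*(η:ℂ))).im / Complex.normSq (m₂ (Complex.I*(η:ℂ))) := by
    intro η hη
    rw [hrel' η hη, Complex.neg_im, Complex.inv_im]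
    ring
  have hIm1_le : ∀ η : ℝ, 0 < η → (m₁ (Complex.I*(η:ℂ))).im ≤ 1/(β*η) := by
    intro η hη
    rw [hIm1 η hη]
    have h2 := hIm2_pos η hη
    have h3 : 0 < (m₂ (Complex.I*(η:ℂ))).im := lt_of_lt_of_le (by positivity) h2
    have h4 : (m₂ (Complex.I*(η:ℂ))).im^2 ≤ Complex.normSq (m₂ (Complex.I*(η:ℂ))) := by
      rw [Complex.normSq_apply]
      nlinarith [sq_nonneg (m₂ (Complex.I*(η:ℂ))).re]
    calc (m₂ (Complex.I*(η:ℂ))).im / Complex.normSq (m₂ (Complex.I*(η:ℂ)))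
        ≤ (m₂ (Complex.I*(η:ℂ))).im / (m₂ (Complex.I*(η:ℂ))).im^2 :=
          div_le_div_of_nonneg_left h3.le (by positivity) h4
      _ = 1/(m₂ (Complex.I*(η:ℂ))).im := by
          rw [sq]
          field_simp
      _ ≤ 1/(β*η) := one_div_le_one_div_of_le (by positivity) h2
  have hb1 : b₁ = 0 := by
    have hub : ∀ᶠ η : ℝ in atTop, b₁ ≤ 1/β * (η^2)⁻¹ := by
      filter_upwards [eventually_gt_atTop (0:ℝ)] with η hη
      have h1 := hIm1_le η hη
      rw [rep_im hrep₁ hη] at h1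
      have h2 := Hm_nonneg (ρ := ρ₁) 0 hη.ne'
      have h3 : b₁ * η ≤ 1/(β*η) := by nlinarith
      have h5 : b₁ * η * η ≤ 1/(β*η) * η := by
        apply mul_le_mul_of_nonneg_right h3 hη.le
      have h6 : 1/(β*η) * η = 1/β := by
        field_simp
      have h7 : b₁ * η^2 ≤ 1/β := by nlinarith
      have hη2 : (0:ℝ) < η^2 := by positivity
      have h8 : b₁ * η^2 * (η^2)⁻¹ ≤ 1/β * (η^2)⁻¹ :=
        mul_le_mul_of_nonneg_right h7 (inv_nonneg.mpr hη2.le)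
      calc b₁ = b₁ * η^2 * (η^2)⁻¹ := by field_simp
        _ ≤ 1/β * (η^2)⁻¹ := h8
    have hpow : Tendsto (fun x : ℝ => x^2) atTop atTop := tendsto_pow_atTop two_ne_zero
    have hpow' : Tendsto (fun η : ℝ => ((η^2)⁻¹ : ℝ)) atTop (nhds 0) :=
      hpow.inv_tendsto_atTop
    have h0 : Tendsto (fun η : ℝ => 1/β * (η^2)⁻¹) atTop (nhds (1/β * 0)) :=
      hpow'.const_mul (1/β)
    rw [mul_zero] at h0
    have hle : b₁ ≤ 0 := ge_of_tendsto h0 hub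
    linarith [hrep₁.1]
  have hIm1' : ∀ η : ℝ, 0 < η → (m₁ (Complex.I*(η:ℂ))).im = η * Hm ρ₁ 0 η := by
    intro η hη
    rw [rep_im hrep₁ hη, hb1]
    ring
  have hρ₁fin : Integrable (fun l : ℝ => l^(2*0)) ρ₁ := by
    apply finite_of_bound hρ₁ (C := 1/β)
    filter_upwards [eventually_gt_atTop (0:ℝ)] with η hη
    have h1 := hIm1_le η hη
    rw [hIm1' η hη] at h1
    have h2 : η * (η * Hm ρ₁ 0 η) ≤ η * (1/(β*η)) :=
      mul_le_mul_of_nonneg_left h1 hη.le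
    calc η^2 * Hm ρ₁ 0 η = η * (η * Hm ρ₁ 0 η) := by ring
      _ ≤ η * (1/(β*η)) := h2
      _ = 1/β := by
          field_simp
  have hf₁lim : Tendsto (fun η : ℝ => η^2 * Hm ρ₁ 0 η) atTop (nhds (1/β)) := by
    have hnsq : Tendsto (fun η : ℝ => Complex.normSq (m₂ (Complex.I*(η:ℂ))/(Complex.I*(η:ℂ))))
        atTop (nhds (Complex.normSq ((β:ℝ):ℂ))) :=
      (Complex.continuous_normSq.tendsto _).comp hlim
    have hnsqβ : Complex.normSq ((β:ℝ):ℂ) = β^2 := by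
      rw [Complex.normSq_ofReal]
      ring
    rw [hnsqβ] at hnsq
    have hq : Tendsto (fun η : ℝ =>
        ((m₂ (Complex.I*(η:ℂ)))/(Complex.I*(η:ℂ))).re /
          Complex.normSq (m₂ (Complex.I*(η:ℂ))/(Complex.I*(η:ℂ))))
        atTop (nhds (β / β^2)) := htendsto_re.div hnsq (pow_ne_zero 2 hβ.ne')
    have hββ : β/β^2 = 1/β := by
      field_simp
    rw [hββ] at hq
    apply hq.congr'
    filter_upwards [hm₂ne, eventually_gt_atTop (0:ℝ)] with η hne hη
    have hIne := Ieta_ne (η := η) hη.ne'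
    have hw : (Complex.I*(η:ℂ)) * (m₂ (Complex.I*(η:ℂ))/(Complex.I*(η:ℂ)))
        = m₂ (Complex.I*(η:ℂ)) := mul_div_cancel₀ _ hIne
    have hwne : m₂ (Complex.I*(η:ℂ))/(Complex.I*(η:ℂ)) ≠ 0 := div_ne_zero hne hIne
    have hwre : (m₂ (Complex.I*(η:ℂ))).im
        = η * (m₂ (Complex.I*(η:ℂ))/(Complex.I*(η:ℂ))).re := by
      conv_lhs => rw [← hw]
      rw [Complex.mul_im]
      simp [Ieta_im]
    have hwnsq : Complex.normSq (m₂ (Complex.I*(η:ℂ)))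
        = η^2 * Complex.normSq (m₂ (Complex.I*(η:ℂ))/(Complex.I*(η:ℂ))) := by
      conv_lhs => rw [← hw]
      rw [map_mul, normSq_Ieta]
    have hnsqw_ne : Complex.normSq (m₂ (Complex.I*(η:ℂ))/(Complex.I*(η:ℂ))) ≠ 0 := by
      simpa [Complex.normSq_eq_zero] using hwne
    have h1 : η * Hm ρ₁ 0 η =
        (η * (m₂ (Complex.I*(η:ℂ))/(Complex.I*(η:ℂ))).re)
          / (η^2 * Complex.normSq (m₂ (Complex.I*(η:ℂ))/(Complex.I*(η:ℂ)))) := by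
      rw [← hIm1' η hη, hIm1 η hη, hwre, hwnsq]
    have hη2 : (η:ℝ)^2 ≠ 0 := by positivity
    have h2 : Hm ρ₁ 0 η = (m₂ (Complex.I*(η:ℂ))/(Complex.I*(η:ℂ))).re
        / (η^2 * Complex.normSq (m₂ (Complex.I*(η:ℂ))/(Complex.I*(η:ℂ)))) := by
      apply mul_left_cancel₀ hη.ne'
      rw [h1]
      field_simp
    rw [h2, ← mul_div_assoc, mul_div_mul_left _ _ hη2]
  -- packaging
  rw [moments_package, show 2*K+2 = 2*(K+1) from by ring, moments_package]
  constructor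
  · -- forward
    intro h2K
    have hρ₂fin : Integrable (fun l : ℝ => l^(2*0)) ρ₂ := h2K 0 (by omega)
    have hG : HE (fun η => β + Hm ρ₂ 0 η) (K+1) :=
      (HE.const β (K+1)).add (HE_Hm0 hρ₂ K h2K)
    have hGlim : Tendsto (fun η => β + Hm ρ₂ 0 η) atTop (nhds β) := by
      have h1 := (tendsto_Hm0_zero hρ₂).const_add β
      rwa [add_zero] at h1
    have hA : HE (fun η => (a₂ - ∫ l, l/(1+l^2) ∂ρ₂) + Em ρ₂ 0 η) K :=
      (HE.const _ K).add (HE_Em0 hρ₂ K h2K)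
    have hW : HE (fun η => (η^2)⁻¹ * ((a₂ - ∫ l, l/(1+l^2) ∂ρ₂) + Em ρ₂ 0 η)^2
        + (β + Hm ρ₂ 0 η)^2) (K+1) := by
      refine HE.add ?_ ?_
      · have hsq : HE (fun η => ((a₂ - ∫ l, l/(1+l^2) ∂ρ₂) + Em ρ₂ 0 η)^2) K := by
          refine HE.congr (Eventually.of_forall fun η => ?_) (hA.mul hA)
          ring
        exact hsq.shift
      · refine HE.congr (Eventually.of_forall fun η => ?_) (hG.mul hG)
        ring
    have hWlim : Tendsto (fun η => (η^2)⁻¹ * ((a₂ - ∫ l, l/(1+l^2) ∂ρ₂) + Em ρ₂ 0 η)^2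
        + (β + Hm ρ₂ 0 η)^2) atTop (nhds (0 + β^2)) := by
      refine Tendsto.add (sq_shift_tendsto_zero hA.bounded) ?_
      have h4 := hGlim.mul hGlim
      have h5 : β*β = β^2 := by ring
      rw [h5] at h4
      refine h4.congr fun η => by ring
    rw [zero_add] at hWlim
    have hWinv := hW.inv hWlim (by positivity)
    have hHE1 : HE (fun η => η^2 * Hm ρ₁ 0 η) (K+1) := by
      refine HE.congr ?_ (hG.mul hWinv)
      filter_upwards [hm₂ne, eventually_gt_atTop (0:ℝ)] with η hne hη
      have hRe2 : (m₂ (Complex.I*(η:ℂ))).re = (a₂ - ∫ l, l/(1+l^2) ∂ρ₂) + Em ρ₂ 0 η :=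
        rep_re_split hrep₂ hρ₂fin hη
      have hnsq_pos : 0 < Complex.normSq (m₂ (Complex.I*(η:ℂ))) :=
        Complex.normSq_pos.mpr hne
      have hnsq : Complex.normSq (m₂ (Complex.I*(η:ℂ)))
          = (((a₂ - ∫ l, l/(1+l^2) ∂ρ₂) + Em ρ₂ 0 η)^2 + (η * (β + Hm ρ₂ 0 η))^2) := by
        rw [Complex.normSq_apply, hRe2, hIm2 η hη]
        ring
      have h1 : η * Hm ρ₁ 0 η = (η * (β + Hm ρ₂ 0 η))
          / Complex.normSq (m₂ (Complex.I*(η:ℂ))) := by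
        rw [← hIm1' η hη, hIm1 η hη, hIm2 η hη]
      rw [hnsq] at h1 hnsq_pos
      have hη2 : (η:ℝ)^2 ≠ 0 := by positivity
      have h6 : η * Hm ρ₁ 0 η *
          (((a₂ - ∫ l, l/(1+l^2) ∂ρ₂) + Em ρ₂ 0 η)^2 + (η * (β + Hm ρ₂ 0 η))^2)
          = η * (β + Hm ρ₂ 0 η) := by
        rw [h1, div_mul_cancel₀ _ hnsq_pos.ne']
      have hkey : Hm ρ₁ 0 η *
          (((a₂ - ∫ l, l/(1+l^2) ∂ρ₂) + Em ρ₂ 0 η)^2 + (η * (β + Hm ρ₂ 0 η))^2)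
          = β + Hm ρ₂ 0 η := by
        apply mul_left_cancel₀ hη.ne'
        rw [← mul_assoc]
        exact h6
      have hWD : (η^2)⁻¹ * ((a₂ - ∫ l, l/(1+l^2) ∂ρ₂) + Em ρ₂ 0 η)^2
          + (β + Hm ρ₂ 0 η)^2
          = (((a₂ - ∫ l, l/(1+l^2) ∂ρ₂) + Em ρ₂ 0 η)^2 + (η * (β + Hm ρ₂ 0 η))^2) / η^2 := by
        field_simp
      show (β + Hm ρ₂ 0 η) * ((η^2)⁻¹ * ((a₂ - ∫ l, l/(1+l^2) ∂ρ₂) + Em ρ₂ 0 η)^2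
          + (β + Hm ρ₂ 0 η)^2)⁻¹ = η^2 * Hm ρ₁ 0 η
      rw [hWD, inv_div]
      rw [mul_div_assoc', div_eq_iff hnsq_pos.ne']
      linear_combination (-(η^2)) * hkey
    exact fun k hk => by
      have h9 := moments_of_HE_Hm hρ₁ (K+1) 0 hρ₁fin hHE1 k hk
      simpa using h9
  · -- backward
    intro h2K1
    have hf₁ : HE (fun η => η^2 * Hm ρ₁ 0 η) (K+1) :=
      HE_Hm hρ₁ (K+1) 0 (fun k hk => h2K1 k (by omega))
    have hE₁sc : HE (fun η => η^2 * Em ρ₁ 0 η) K :=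
      HE_Em hρ₁ K 0 (fun k hk => h2K1 k (by omega))
    have hm₁lim : Tendsto (fun η : ℝ => m₁ (Complex.I*(η:ℂ))) atTop (nhds 0) := by
      have h1 : Tendsto (fun η : ℝ => (Complex.I*(η:ℂ))⁻¹) atTop (nhds 0) := by
        apply squeeze_zero_norm' (a := fun η : ℝ => η⁻¹)
        · filter_upwards [eventually_gt_atTop (0:ℝ)] with η hη
          rw [norm_inv]
          have : ‖Complex.I*(η:ℂ)‖ = |η| := by
            rw [norm_mul, Complex.norm_I, one_mul, Complex.norm_real, Real.norm_eq_abs]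
          rw [this, _root_.abs_of_pos hη]
        · exact tendsto_inv_atTop_zero
      have h2 := (h1.mul (hlim.inv₀ hβC)).neg
      rw [zero_mul, neg_zero] at h2
      apply h2.congr'
      filter_upwards [eventually_gt_atTop (0:ℝ)] with η hη
      rw [← mul_inv, mul_div_cancel₀ _ (Ieta_ne hη.ne'), ← hrel' η hη]
    have hRe1lim : Tendsto (fun η : ℝ => (m₁ (Complex.I*(η:ℂ))).re) atTop (nhds 0) := by
      have h3 := (Complex.continuous_re.tendsto 0).comp hm₁lim
      simpa [Function.comp_def] using h3
    have ha₁ : a₁ - ∫ l, l/(1+l^2) ∂ρ₁ = 0 := by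
      have h1 : Tendsto (fun η : ℝ => (a₁ - ∫ l, l/(1+l^2) ∂ρ₁) + Em ρ₁ 0 η) atTop
          (nhds ((a₁ - ∫ l, l/(1+l^2) ∂ρ₁) + 0)) :=
        tendsto_const_nhds.add (tendsto_Em0_zero hρ₁fin)
      have h2 : Tendsto (fun η : ℝ => (a₁ - ∫ l, l/(1+l^2) ∂ρ₁) + Em ρ₁ 0 η) atTop
          (nhds 0) := by
        apply hRe1lim.congr'
        filter_upwards [eventually_gt_atTop (0:ℝ)] with η hη
        exact rep_re_split hrep₁ hρ₁fin hη
      have h3 := tendsto_nhds_unique h1 h2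
      linarith
    have hV : HE (fun η => (η^2)⁻¹ * (η^2 * Em ρ₁ 0 η)^2 + (η^2 * Hm ρ₁ 0 η)^2) (K+1) := by
      refine HE.add ?_ ?_
      · have hsq : HE (fun η => (η^2 * Em ρ₁ 0 η)^2) K := by
          refine HE.congr (Eventually.of_forall fun η => ?_) (hE₁sc.mul hE₁sc)
          ring
        exact hsq.shift
      · refine HE.congr (Eventually.of_forall fun η => ?_) (hf₁.mul hf₁)
        ring
    have hVlim : Tendsto (fun η => (η^2)⁻¹ * (η^2 * Em ρ₁ 0 η)^2 + (η^2 * Hm ρ₁ 0 η)^2)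
        atTop (nhds (0 + (1/β)^2)) := by
      refine Tendsto.add (sq_shift_tendsto_zero hE₁sc.bounded) ?_
      have h4 := hf₁lim.mul hf₁lim
      have h5 : 1/β*(1/β) = (1/β)^2 := by ring
      rw [h5] at h4
      refine h4.congr fun η => by ring
    rw [zero_add] at hVlim
    have hVinv := hV.inv hVlim (by positivity)
    have hP : HE (fun η => β + Hm ρ₂ 0 η) (K+1) := by
      refine HE.congr ?_ (hf₁.mul hVinv)
      filter_upwards [hm₂ne, eventually_gt_atTop (0:ℝ)] with η hne hη
      have hm₁ne : m₁ (Complex.I*(η:ℂ)) ≠ 0 := by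
        rw [hrel' η hη]
        exact neg_ne_zero.mpr (inv_ne_zero hne)
      have hm₂eq : m₂ (Complex.I*(η:ℂ)) = -(m₁ (Complex.I*(η:ℂ)))⁻¹ := by
        rw [hrel' η hη, inv_neg, inv_inv, neg_neg]
      have hIm2' : (m₂ (Complex.I*(η:ℂ))).im
          = (m₁ (Complex.I*(η:ℂ))).im / Complex.normSq (m₁ (Complex.I*(η:ℂ))) := by
        rw [hm₂eq, Complex.neg_im, Complex.inv_im]
        ring
      have hRe1 : (m₁ (Complex.I*(η:ℂ))).re = Em ρ₁ 0 η := by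
        rw [rep_re_split hrep₁ hρ₁fin hη, ha₁, zero_add]
      have hnsq1 : Complex.normSq (m₁ (Complex.I*(η:ℂ)))
          = (Em ρ₁ 0 η)^2 + (η * Hm ρ₁ 0 η)^2 := by
        rw [Complex.normSq_apply, hRe1, hIm1' η hη]
        ring
      have hnsq1_pos : 0 < Complex.normSq (m₁ (Complex.I*(η:ℂ))) :=
        Complex.normSq_pos.mpr hm₁ne
      have h1 : η * (β + Hm ρ₂ 0 η)
          = (η * Hm ρ₁ 0 η) / ((Em ρ₁ 0 η)^2 + (η * Hm ρ₁ 0 η)^2) := by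
        rw [← hIm2 η hη, hIm2', hIm1' η hη, hnsq1]
      rw [hnsq1] at hnsq1_pos
      have hη2 : (η:ℝ)^2 ≠ 0 := by positivity
      have h6 : η * (β + Hm ρ₂ 0 η) * ((Em ρ₁ 0 η)^2 + (η * Hm ρ₁ 0 η)^2)
          = η * Hm ρ₁ 0 η := by
        rw [h1, div_mul_cancel₀ _ hnsq1_pos.ne']
      have hkey : (β + Hm ρ₂ 0 η) * ((Em ρ₁ 0 η)^2 + (η * Hm ρ₁ 0 η)^2)
          = Hm ρ₁ 0 η := by
        apply mul_left_cancel₀ hη.ne'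
        rw [← mul_assoc]
        exact h6
      have hVD : (η^2)⁻¹ * (η^2 * Em ρ₁ 0 η)^2 + (η^2 * Hm ρ₁ 0 η)^2
          = ((Em ρ₁ 0 η)^2 + (η * Hm ρ₁ 0 η)^2) * η^2 := by
        field_simp
      show (η^2 * Hm ρ₁ 0 η) * ((η^2)⁻¹ * (η^2 * Em ρ₁ 0 η)^2 + (η^2 * Hm ρ₁ 0 η)^2)⁻¹
          = β + Hm ρ₂ 0 η
      rw [hVD, mul_inv]
      have hDne := hnsq1_pos.ne'
      rw [show η^2 * Hm ρ₁ 0 η * (((Em ρ₁ 0 η)^2 + (η * Hm ρ₁ 0 η)^2)⁻¹ * (η^2)⁻¹)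
          = Hm ρ₁ 0 η * ((Em ρ₁ 0 η)^2 + (η * Hm ρ₁ 0 η)^2)⁻¹ * (η^2 * (η^2)⁻¹) by ring,
        mul_inv_cancel₀ hη2, mul_one, ← mul_inv_cancel_right₀ hDne (β + Hm ρ₂ 0 η), hkey]
    obtain ⟨c, hc, hpeel⟩ := hP
    have hc0 : c = β := by
      refine tendsto_nhds_unique hc ?_
      have h1 := (tendsto_Hm0_zero hρ₂).const_add β
      rwa [add_zero] at h1
    subst hc0
    have hHE2 : HE (fun η => η^2 * Hm ρ₂ 0 η) K := by
      refine HE.congr (Eventually.of_forall fun η => ?_) hpeel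
      ring
    have hρ₂fin : Integrable (fun l : ℝ => l^(2*0)) ρ₂ := by
      obtain ⟨C, hC⟩ := hHE2.bounded
      apply finite_of_bound hρ₂ (C := C)
      filter_upwards [hC] with η h
      exact (le_abs_self _).trans h
    exact fun k hk => by
      have h9 := moments_of_HE_Hm hρ₂ K 0 hρ₂fin hHE2 k hk
      simpa using h9
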